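/- Let M ∈ ℝ^{n×n} and N ∈ ℝ^{r×r} be real symmetric matrices with r < n. Suppose there exist r-dimensional subspaces A, B ⊆ ℝ^n with linear isomorphisms p_A : ℝ^r → A and p_B : ℝ^r → B such that for all nonzero x ∈ ℝ^r, R(M, p_A(x)) ≤ R(N, x) and R(M, p_B(x)) ≥ R(N, x), where R(M, x) = xᵀMx / xᵀx is the Rayleigh quotient. Then the eigenvalues of N interlace those of M, i.e., λ_k(M) ≤ λ_k(N) ≤ λ_{n−r+k}(M) for k = 1,…,r. -/

import Mathlib

open scoped Matrix
open Finset

/-- The `k`-th smallest eigenvalue of a real matrix (eigenvalues sorted ascending);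
junk value `0` if the matrix is not Hermitian (i.e. not symmetric, over `ℝ`). -/
noncomputable def sortedEig {m : ℕ} (A : Matrix (Fin m) (Fin m) ℝ) : Fin m → ℝ :=
  if h : A.IsHermitian then fun k => h.eigenvalues (Tuple.sort h.eigenvalues k) else fun _ => 0

/-- `B` (of size `r`) interlaces `A` (of size `n`, `r < n`):
`λ_k(A) ≤ λ_k(B) ≤ λ_{n-r+k}(A)` for `k = 1, …, r` (0-indexed here). -/
def Interlaces {r n : ℕ} (hrn : r < n) (B : Matrix (Fin r) (Fin r) ℝ)
    (A : Matrix (Fin n) (Fin n) ℝ) : Prop :=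
  ∀ k : Fin r,
    sortedEig A ⟨k.1, lt_trans k.isLt hrn⟩ ≤ sortedEig B k ∧
    sortedEig B k ≤ sortedEig A ⟨n - r + k.1, by have := k.isLt; omega⟩

/-- The Rayleigh quotient `R(M, x) = xᵀ M x / xᵀ x`. -/
noncomputable def rayleigh {m : ℕ} (M : Matrix (Fin m) (Fin m) ℝ) (x : Fin m → ℝ) : ℝ :=
  (x ⬝ᵥ M.mulVec x) / (x ⬝ᵥ x)

namespace InterlaceAux

variable {m : ℕ}

lemma dot_self_pos {x : Fin m → ℝ} (hx : x ≠ 0) : 0 < x ⬝ᵥ x := by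
  have h0 : 0 ≤ x ⬝ᵥ x := Finset.sum_nonneg fun i _ => mul_self_nonneg _
  rcases h0.lt_or_eq with h | h
  · exact h
  · exact absurd (dotProduct_self_eq_zero.1 h.symm) hx

lemma sum_dot {ι : Type*} (S : Finset ι) (f : ι → Fin m → ℝ) (w : Fin m → ℝ) :
    (∑ i ∈ S, f i) ⬝ᵥ w = ∑ i ∈ S, f i ⬝ᵥ w := by
  simp only [dotProduct, Finset.sum_apply, Finset.sum_mul]
  rw [Finset.sum_comm]

lemma dot_sum {ι : Type*} (S : Finset ι) (w : Fin m → ℝ) (f : ι → Fin m → ℝ) :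
    w ⬝ᵥ (∑ i ∈ S, f i) = ∑ i ∈ S, w ⬝ᵥ f i := by
  simp only [dotProduct, Finset.sum_apply, Finset.mul_sum]
  rw [Finset.sum_comm]

lemma ortho_sum_dot (S : Finset (Fin m)) (v : Fin m → Fin m → ℝ)
    (ho : ∀ i ∈ S, ∀ j ∈ S, v i ⬝ᵥ v j = if i = j then (1:ℝ) else 0)
    (c d : Fin m → ℝ) :
    (∑ i ∈ S, c i • v i) ⬝ᵥ (∑ j ∈ S, d j • v j) = ∑ i ∈ S, c i * d i := by
  rw [sum_dot]
  refine Finset.sum_congr rfl fun i hi => ?_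
  rw [smul_dotProduct, dot_sum]
  have : ∀ j ∈ S, v i ⬝ᵥ d j • v j = if i = j then d j else 0 := by
    intro j hj
    rw [dotProduct_smul, ho i hi j hj]
    by_cases h : i = j <;> simp [h]
  rw [Finset.sum_congr rfl this, Finset.sum_ite_eq S i d, if_pos hi]
  simp [mul_comm]

lemma exists_repr (S : Finset (Fin m)) (v : Fin m → Fin m → ℝ)
    (ho : ∀ i ∈ S, ∀ j ∈ S, v i ⬝ᵥ v j = if i = j then (1:ℝ) else 0)
    {x : Fin m → ℝ} (hx : x ∈ Submodule.span ℝ (v '' ↑S)) :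
    ∃ c : Fin m → ℝ, x = ∑ i ∈ S, c i • v i := by
  have himg : v '' ↑S = ↑(S.image v) := by simp
  rw [himg] at hx
  obtain ⟨f, -, hf⟩ := Submodule.mem_span_finset.1 hx
  refine ⟨fun i => f (v i), ?_⟩
  rw [← hf, Finset.sum_image]
  intro i hi j hj hij
  by_contra h
  have h1 := ho i hi i hi
  have h2 := ho i hi j hj
  rw [if_pos rfl] at h1
  rw [if_neg h] at h2
  rw [← hij] at h2
  rw [h1] at h2
  exact one_ne_zero h2

lemma span_quad_le (M : Matrix (Fin m) (Fin m) ℝ) (S : Finset (Fin m))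
    (v : Fin m → Fin m → ℝ) (μ : Fin m → ℝ) (c : ℝ)
    (hv : ∀ i ∈ S, M *ᵥ v i = μ i • v i)
    (ho : ∀ i ∈ S, ∀ j ∈ S, v i ⬝ᵥ v j = if i = j then (1:ℝ) else 0)
    (hμ : ∀ i ∈ S, μ i ≤ c)
    {x : Fin m → ℝ} (hx : x ∈ Submodule.span ℝ (v '' ↑S)) :
    x ⬝ᵥ M *ᵥ x ≤ c * (x ⬝ᵥ x) := by
  obtain ⟨f, rfl⟩ := exists_repr S v ho hx
  have hMx : M *ᵥ (∑ i ∈ S, f i • v i) = ∑ i ∈ S, (f i * μ i) • v i := by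
    rw [show M *ᵥ (∑ i ∈ S, f i • v i) = M.mulVecLin (∑ i ∈ S, f i • v i) from rfl,
      map_sum]
    refine Finset.sum_congr rfl fun i hi => ?_
    rw [Matrix.mulVecLin_apply, Matrix.mulVec_smul, hv i hi, smul_smul]
  rw [hMx, ortho_sum_dot S v ho, ortho_sum_dot S v ho, Finset.mul_sum]
  refine Finset.sum_le_sum fun i hi => ?_
  have : f i * (f i * μ i) = μ i * (f i * f i) := by ring
  rw [this]
  exact mul_le_mul_of_nonneg_right (hμ i hi) (mul_self_nonneg _)

lemma span_quad_ge (M : Matrix (Fin m) (Fin m) ℝ) (S : Finset (Fin m))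
    (v : Fin m → Fin m → ℝ) (μ : Fin m → ℝ) (c : ℝ)
    (hv : ∀ i ∈ S, M *ᵥ v i = μ i • v i)
    (ho : ∀ i ∈ S, ∀ j ∈ S, v i ⬝ᵥ v j = if i = j then (1:ℝ) else 0)
    (hμ : ∀ i ∈ S, c ≤ μ i)
    {x : Fin m → ℝ} (hx : x ∈ Submodule.span ℝ (v '' ↑S)) :
    c * (x ⬝ᵥ x) ≤ x ⬝ᵥ M *ᵥ x := by
  obtain ⟨f, rfl⟩ := exists_repr S v ho hx
  have hMx : M *ᵥ (∑ i ∈ S, f i • v i) = ∑ i ∈ S, (f i * μ i) • v i := by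
    rw [show M *ᵥ (∑ i ∈ S, f i • v i) = M.mulVecLin (∑ i ∈ S, f i • v i) from rfl,
      map_sum]
    refine Finset.sum_congr rfl fun i hi => ?_
    rw [Matrix.mulVecLin_apply, Matrix.mulVec_smul, hv i hi, smul_smul]
  rw [hMx, ortho_sum_dot S v ho, ortho_sum_dot S v ho, Finset.mul_sum]
  refine Finset.sum_le_sum fun i hi => ?_
  have : f i * (f i * μ i) = μ i * (f i * f i) := by ring
  rw [this]
  exact mul_le_mul_of_nonneg_right (hμ i hi) (mul_self_nonneg _)

lemma finrank_span_ortho (S : Finset (Fin m)) (v : Fin m → Fin m → ℝ)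
    (ho : ∀ i ∈ S, ∀ j ∈ S, v i ⬝ᵥ v j = if i = j then (1:ℝ) else 0) :
    Module.finrank ℝ (Submodule.span ℝ (v '' ↑S)) = S.card := by
  have hli : LinearIndependent ℝ (fun i : ↥S => v i) := by
    rw [linearIndependent_iff']
    intro s g hg i hi
    have hdot := congrArg (fun w => v (i : Fin m) ⬝ᵥ w) hg
    simp only [dotProduct_zero] at hdot
    rw [dot_sum] at hdot
    have : ∀ j ∈ s, v (i : Fin m) ⬝ᵥ g j • v (j : Fin m) = if i = j then g j else 0 := by
      intro j hj
      rw [dotProduct_smul, ho i i.2 j j.2]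
      by_cases h : i = j
      · simp [h]
      · have : ¬((i : Fin m) = (j : Fin m)) := fun he => h (Subtype.ext he)
        simp [h, this]
    rw [Finset.sum_congr rfl this, Finset.sum_ite_eq s i g, if_pos hi] at hdot
    exact hdot
  have hrange : Set.range (fun i : ↥S => v i) = v '' ↑S := by
    rw [show (fun i : ↥S => v i) = v ∘ (Subtype.val : ↥S → Fin m) from rfl,
      Set.range_comp]

    ext a
    simp
  rw [← hrange, finrank_span_eq_card hli, Fintype.card_coe]

lemma exists_ne_zero_mem_inf (V W : Submodule ℝ (Fin m → ℝ))
    (h : m < Module.finrank ℝ V + Module.finrank ℝ W) :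
    ∃ x, x ≠ 0 ∧ x ∈ V ∧ x ∈ W := by
  have h1 := Submodule.finrank_sup_add_finrank_inf_eq V W
  have h2 : Module.finrank ℝ ↥(V ⊔ W) ≤ m := by
    have h3 := Submodule.finrank_le (V ⊔ W)
    simpa using h3
  have h3 : 0 < Module.finrank ℝ ↥(V ⊓ W) := by omega
  have h4 : V ⊓ W ≠ ⊥ := by
    intro hbot
    rw [hbot] at h3
    simp at h3
  obtain ⟨x, hxm, hx0⟩ := (Submodule.ne_bot_iff _).1 h4
  exact ⟨x, hx0, hxm.1, hxm.2⟩

lemma sortedEig_eq {M : Matrix (Fin m) (Fin m) ℝ} (hM : M.IsHermitian) :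
    sortedEig M = fun k => hM.eigenvalues (Tuple.sort hM.eigenvalues k) := by
  rw [sortedEig, dif_pos hM]

/-- Sorted eigenvector family with all needed properties. -/
lemma exists_eigbasis {M : Matrix (Fin m) (Fin m) ℝ} (hM : M.IsHermitian) :
    ∃ e : Fin m → Fin m → ℝ,
      (∀ i, M *ᵥ e i = sortedEig M i • e i) ∧
      (∀ i j, e i ⬝ᵥ e j = if i = j then (1:ℝ) else 0) ∧
      Monotone (sortedEig M) := by
  set σ := Tuple.sort hM.eigenvalues with hσ
  refine ⟨fun i => hM.eigenvectorBasis (σ i), fun i => ?_, fun i j => ?_, ?_⟩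
  · rw [sortedEig_eq hM]
    exact hM.mulVec_eigenvectorBasis (σ i)
  · have horth := hM.eigenvectorBasis.orthonormal
    rw [orthonormal_iff_ite] at horth
    have h1 := horth (σ i) (σ j)
    have h2 : (inner ℝ (hM.eigenvectorBasis (σ i)) (hM.eigenvectorBasis (σ j)) : ℝ)
        = (hM.eigenvectorBasis (σ i) : Fin m → ℝ) ⬝ᵥ (hM.eigenvectorBasis (σ j) : Fin m → ℝ) := by
      rw [EuclideanSpace.inner_eq_star_dotProduct, star_trivial, dotProduct_comm]
    rw [h2] at h1
    rw [h1]
    by_cases h : i = j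
    · simp [h]
    · have : σ i ≠ σ j := fun he => h (σ.injective he)
      simp [h, this]
  · rw [sortedEig_eq hM]
    exact Tuple.monotone_sort hM.eigenvalues

lemma lower_witness {M : Matrix (Fin m) (Fin m) ℝ} (hM : M.IsHermitian) (k : Fin m)
    (V : Submodule ℝ (Fin m → ℝ)) (hV : Module.finrank ℝ V = k.1 + 1) :
    ∃ x, x ≠ 0 ∧ x ∈ V ∧ sortedEig M k * (x ⬝ᵥ x) ≤ x ⬝ᵥ M *ᵥ x := by
  obtain ⟨e, hv, ho, hmono⟩ := exists_eigbasis hM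
  set S : Finset (Fin m) := Finset.Ici k with hS
  set W := Submodule.span ℝ (e '' ↑S) with hW
  have hWrank : Module.finrank ℝ W = m - k.1 := by
    rw [hW, finrank_span_ortho S e fun i _ j _ => ho i j, hS, Fin.card_Ici]
  have hsum : m < Module.finrank ℝ V + Module.finrank ℝ W := by
    rw [hV, hWrank]
    have := k.isLt
    omega
  obtain ⟨x, hx0, hxV, hxW⟩ := exists_ne_zero_mem_inf V W hsum
  refine ⟨x, hx0, hxV, ?_⟩
  exact span_quad_ge M S e (sortedEig M) (sortedEig M k)
    (fun i _ => hv i) (fun i _ j _ => ho i j)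
    (fun i hi => hmono (Finset.mem_Ici.1 hi)) hxW

lemma upper_witness {M : Matrix (Fin m) (Fin m) ℝ} (hM : M.IsHermitian) (k : Fin m)
    (V : Submodule ℝ (Fin m → ℝ)) (hV : Module.finrank ℝ V = m - k.1) :
    ∃ x, x ≠ 0 ∧ x ∈ V ∧ x ⬝ᵥ M *ᵥ x ≤ sortedEig M k * (x ⬝ᵥ x) := by
  obtain ⟨e, hv, ho, hmono⟩ := exists_eigbasis hM
  set S : Finset (Fin m) := Finset.Iic k with hS
  set W := Submodule.span ℝ (e '' ↑S) with hW
  have hWrank : Module.finrank ℝ W = k.1 + 1 := by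
    rw [hW, finrank_span_ortho S e fun i _ j _ => ho i j, hS, Fin.card_Iic]
  have hsum : m < Module.finrank ℝ V + Module.finrank ℝ W := by
    rw [hV, hWrank]
    have := k.isLt
    omega
  obtain ⟨x, hx0, hxV, hxW⟩ := exists_ne_zero_mem_inf V W hsum
  refine ⟨x, hx0, hxV, ?_⟩
  exact span_quad_le M S e (sortedEig M) (sortedEig M k)
    (fun i _ => hv i) (fun i _ j _ => ho i j)
    (fun i hi => hmono (Finset.mem_Iic.1 hi)) hxW

lemma lower_space {N : Matrix (Fin m) (Fin m) ℝ} (hN : N.IsHermitian) (k : Fin m) :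
    ∃ W : Submodule ℝ (Fin m → ℝ), Module.finrank ℝ W = k.1 + 1 ∧
      ∀ x ∈ W, x ⬝ᵥ N *ᵥ x ≤ sortedEig N k * (x ⬝ᵥ x) := by
  obtain ⟨e, hv, ho, hmono⟩ := exists_eigbasis hN
  set S : Finset (Fin m) := Finset.Iic k with hS
  refine ⟨Submodule.span ℝ (e '' ↑S), ?_, fun x hx => ?_⟩
  · rw [finrank_span_ortho S e fun i _ j _ => ho i j, hS, Fin.card_Iic]
  · exact span_quad_le N S e (sortedEig N) (sortedEig N k)
      (fun i _ => hv i) (fun i _ j _ => ho i j)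
      (fun i hi => hmono (Finset.mem_Iic.1 hi)) hx

lemma upper_space {N : Matrix (Fin m) (Fin m) ℝ} (hN : N.IsHermitian) (k : Fin m) :
    ∃ W : Submodule ℝ (Fin m → ℝ), Module.finrank ℝ W = m - k.1 ∧
      ∀ x ∈ W, sortedEig N k * (x ⬝ᵥ x) ≤ x ⬝ᵥ N *ᵥ x := by
  obtain ⟨e, hv, ho, hmono⟩ := exists_eigbasis hN
  set S : Finset (Fin m) := Finset.Ici k with hS
  refine ⟨Submodule.span ℝ (e '' ↑S), ?_, fun x hx => ?_⟩
  · rw [finrank_span_ortho S e fun i _ j _ => ho i j, hS, Fin.card_Ici]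
  · exact span_quad_ge N S e (sortedEig N) (sortedEig N k)
      (fun i _ => hv i) (fun i _ j _ => ho i j)
      (fun i hi => hmono (Finset.mem_Ici.1 hi)) hx

end InterlaceAux

theorem interlaces_of_rayleigh {n r : ℕ} (hrn : r < n)
    (M : Matrix (Fin n) (Fin n) ℝ) (N : Matrix (Fin r) (Fin r) ℝ)
    (hM : M.IsHermitian) (hN : N.IsHermitian)
    (A B : Submodule ℝ (Fin n → ℝ))
    (hA : Module.finrank ℝ A = r) (hB : Module.finrank ℝ B = r)
    (pA : (Fin r → ℝ) ≃ₗ[ℝ] A) (pB : (Fin r → ℝ) ≃ₗ[ℝ] B)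
    (hRA : ∀ x : Fin r → ℝ, x ≠ 0 → rayleigh M ((pA x : Fin n → ℝ)) ≤ rayleigh N x)
    (hRB : ∀ x : Fin r → ℝ, x ≠ 0 → rayleigh N x ≤ rayleigh M ((pB x : Fin n → ℝ))) :
    Interlaces hrn N M := by
  intro k
  constructor
  · -- λ_k(M) ≤ λ_k(N)
    set k' : Fin n := ⟨k.1, lt_trans k.isLt hrn⟩ with hk'
    obtain ⟨W, hWrank, hWbound⟩ := InterlaceAux.lower_space hN k
    set L : (Fin r → ℝ) →ₗ[ℝ] (Fin n → ℝ) := A.subtype.comp pA.toLinearMap with hL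
    have hLinj : Function.Injective L := A.injective_subtype.comp pA.injective
    have hVrank : Module.finrank ℝ (W.map L) = k'.1 + 1 := by
      rw [← (W.equivMapOfInjective L hLinj).finrank_eq, hWrank]
    obtain ⟨x, hx0, hxV, hxb⟩ := InterlaceAux.lower_witness hM k' (W.map L) hVrank
    obtain ⟨y, hyW, hyx⟩ := Submodule.mem_map.1 hxV
    have hy0 : y ≠ 0 := by
      rintro rfl
      rw [map_zero] at hyx
      exact hx0 hyx.symm
    have hxdot : 0 < x ⬝ᵥ x := InterlaceAux.dot_self_pos hx0
    have hydot : 0 < y ⬝ᵥ y := InterlaceAux.dot_self_pos hy0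
    have h1 : sortedEig M k' ≤ rayleigh M x := by
      rw [rayleigh, le_div_iff₀ hxdot]
      exact hxb
    have h2 : rayleigh M x ≤ rayleigh N y := by
      have : (pA y : Fin n → ℝ) = L y := rfl
      rw [← hyx, ← this]
      exact hRA y hy0
    have h3 : rayleigh N y ≤ sortedEig N k := by
      rw [rayleigh, div_le_iff₀ hydot]
      exact hWbound y hyW
    exact le_trans h1 (le_trans h2 h3)
  · -- λ_k(N) ≤ λ_{n-r+k}(M)
    set j : Fin n := ⟨n - r + k.1, by have := k.isLt; omega⟩ with hj
    obtain ⟨W, hWrank, hWbound⟩ := InterlaceAux.upper_space hN k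
    set L : (Fin r → ℝ) →ₗ[ℝ] (Fin n → ℝ) := B.subtype.comp pB.toLinearMap with hL
    have hLinj : Function.Injective L := B.injective_subtype.comp pB.injective
    have hVrank : Module.finrank ℝ (W.map L) = n - j.1 := by
      rw [← (W.equivMapOfInjective L hLinj).finrank_eq, hWrank, hj]
      have := k.isLt
      simp only []
      omega
    obtain ⟨x, hx0, hxV, hxb⟩ := InterlaceAux.upper_witness hM j (W.map L) hVrank
    obtain ⟨y, hyW, hyx⟩ := Submodule.mem_map.1 hxV
    have hy0 : y ≠ 0 := by
      rintro rfl
      rw [map_zero] at hyx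
      exact hx0 hyx.symm
    have hxdot : 0 < x ⬝ᵥ x := InterlaceAux.dot_self_pos hx0
    have hydot : 0 < y ⬝ᵥ y := InterlaceAux.dot_self_pos hy0
    have h1 : sortedEig N k ≤ rayleigh N y := by
      rw [rayleigh, le_div_iff₀ hydot]
      exact hWbound y hyW
    have h2 : rayleigh N y ≤ rayleigh M x := by
      have : (pB y : Fin n → ℝ) = L y := rfl
      rw [← hyx, ← this]
      exact hRB y hy0
    have h3 : rayleigh M x ≤ sortedEig M j := by
      rw [rayleigh, div_le_iff₀ hxdot]
      exact hxb
    exact le_trans h1 (le_trans h2 h3)
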